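/- arXiv:1507.01423 — 3 statements merged into one kernel-verified Lean document; each statement's English description precedes it below -/
import Mathlib

section
/- Let (α, ∏_{i=1}^n C_i, A, γ) be a Galois connection between the componentwise-ordered product ∏_{i=1}^n C_i of complete lattices C_i and a complete lattice A. Fix i ∈ {1,…,n} and define: A_i = {c_i ∈ C_i : ∃a ∈ A with γ(a)_i = c_i}, ordered by the restriction of the order of C_i; γ_i : A_i → C_i as the identity inclusion; and α_i : C_i → A_i by α_i(c_i) = γ(α(c_i, ⊥_{−i}))_i, where (c_i, ⊥_{−i}) denotes the tuple with c_i in coordinate i and the bottom element of C_j in each coordinate j ≠ i. Then (α_i, C_i, A_i, γ_i) is a Galois connection (in particular A_i is closed under arbitrary infima of C_i taken of its subsets, hence a complete lattice). Moreover, if (α, ∏ C_i, A, γ) is (finitely) disjunctive then so is (α_i, C_i, A_i, γ_i). -/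
/-- decomposition of a Galois connection on a product of complete lattices
into a Galois connection on the i-th component.  The abstract domain is
`Aᵢ = {cᵢ | ∃ a, γ a i = cᵢ}` (which is closed under arbitrary infima of `C i`,
hence a complete lattice), `γᵢ` is the identity inclusion and
`αᵢ cᵢ = γ (α (cᵢ, ⊥₋ᵢ)) i`.  Moreover, if `(α, ∏ Cᵢ, A, γ)` is (finitely)
disjunctive then so is `(αᵢ, Cᵢ, Aᵢ, γᵢ)`, i.e. `Aᵢ` is closed under (finite)
suprema as well. -/
theorem decomposition_of_product_galois_connection {n : ℕ} {C : Fin n → Type*}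
    [∀ j, CompleteLattice (C j)] {A : Type*} [CompleteLattice A]
    (α : (∀ j, C j) → A) (γ : A → (∀ j, C j))
    (hgc : GaloisConnection α γ) (i : Fin n) :
    (∀ T : Set (C i), T ⊆ {ci | ∃ a, γ a i = ci} → sInf T ∈ {ci | ∃ a, γ a i = ci}) ∧
    GaloisConnection
      (fun ci : C i =>
        (⟨γ (α (Function.update ⊥ i ci)) i, α (Function.update ⊥ i ci), rfl⟩ :
          {ci : C i // ∃ a, γ a i = ci}))
      (fun x : {ci : C i // ∃ a, γ a i = ci} => (x : C i)) ∧
    ((∀ T : Set A, γ (sSup T) = sSup (γ '' T)) →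
      ∀ T : Set (C i), T ⊆ {ci | ∃ a, γ a i = ci} → sSup T ∈ {ci | ∃ a, γ a i = ci}) ∧
    ((∀ x y : A, γ (x ⊔ y) = γ x ⊔ γ y) →
      ∀ x y : C i, (∃ a, γ a i = x) → (∃ a, γ a i = y) → ∃ a, γ a i = x ⊔ y) := by
  refine ⟨?_, ?_, ?_, ?_⟩
  · intro T hT
    refine ⟨⨅ t : T, (hT t.2).choose, ?_⟩
    rw [hgc.u_iInf]
    simp only [iInf_apply]
    have : ∀ t : T, γ (hT t.2).choose i = (t : C i) := fun t => (hT t.2).choose_spec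
    simp only [this]
    exact (sInf_eq_iInf' T).symm
  · intro c x
    constructor
    · intro h
      calc c = Function.update (⊥ : ∀ j, C j) i c i := by simp
        _ ≤ γ (α (Function.update ⊥ i c)) i := hgc.le_u_l _ i
        _ ≤ (x : C i) := h
    · intro h
      obtain ⟨a, ha⟩ := x.2
      show γ (α (Function.update ⊥ i c)) i ≤ (x : C i)
      have hle : Function.update (⊥ : ∀ j, C j) i c ≤ γ a := by
        intro j
        rcases eq_or_ne j i with rfl | hj
        · simpa [ha] using h
        · simp [Function.update_of_ne hj]
      have := hgc.monotone_u (hgc.l_le hle)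
      calc γ (α (Function.update ⊥ i c)) i ≤ γ a i := this i
        _ = (x : C i) := by rw [ha, Subtype.coe_mk]
  · intro hdisj T hT
    refine ⟨sSup (Set.range fun t : T => (hT t.2).choose), ?_⟩
    rw [hdisj, sSup_apply]
    apply le_antisymm
    · apply iSup_le
      rintro ⟨g, ⟨a, ⟨t, rfl⟩, rfl⟩⟩
      show γ (hT t.2).choose i ≤ sSup T
      rw [(hT t.2).choose_spec]
      exact le_sSup t.2
    · apply sSup_le
      intro b hb
      refine le_iSup_of_le ⟨γ (hT hb).choose,
        ⟨(hT hb).choose, ⟨⟨b, hb⟩, rfl⟩, rfl⟩⟩ ?_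
      exact le_of_eq (hT hb).choose_spec.symm
  · intro hdisj x y ⟨ax, hax⟩ ⟨ay, hay⟩
    refine ⟨ax ⊔ ay, ?_⟩
    have := hdisj ax ay
    have : γ (ax ⊔ ay) i = γ ax i ⊔ γ ay i := by rw [this]; rfl
    rw [this, hax, hay]
end

section
/- Let C be a complete lattice and let f : C → ℘∧(C) be an S-monotone multivalued function (each value f(c) contains its infimum). Then f has a least fixed point, i.e., the set Fix(f) = {x ∈ C : x ∈ f(x)} has a least element; moreover, lfp(f) = ⋁_{α ∈ Ord} f∧^α(⊥), where f∧(c) = ⋀ f(c) and f∧^α denotes the α-th transfinite iterate of f∧ starting from the bottom element ⊥ of C. -/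
universe u

/-- Smyth preorder on subsets: `X ⪯ₛ Y` iff every `y ∈ Y` is above some `x ∈ X`. -/
def SmythLE {β : Type u} [LE β] (X Y : Set β) : Prop := ∀ y ∈ Y, ∃ x ∈ X, x ≤ y

/-- Upward transfinite iterates of `g` starting from `⊥`:
`g^0 = ⊥`, `g^(β+1) = g (g^β)`, and suprema are taken at limit ordinals. -/
noncomputable def upIter {β : Type u} [CompleteLattice β] (g : β → β) (o : Ordinal.{u}) : β :=
  Ordinal.limitRecOn (motive := fun _ => β) o ⊥ (fun _ ih => g ih)
    (fun o _ ih => ⨆ b : Set.Iio o, ih b.1 b.2)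

lemma upIter_zero {β : Type u} [CompleteLattice β] (g : β → β) : upIter g 0 = ⊥ :=
  Ordinal.limitRecOn_zero _ _ _

lemma upIter_succ {β : Type u} [CompleteLattice β] (g : β → β) (o : Ordinal.{u}) :
    upIter g (Order.succ o) = g (upIter g o) :=
  Ordinal.limitRecOn_succ _ _ _ _

lemma upIter_limit {β : Type u} [CompleteLattice β] (g : β → β) {o : Ordinal.{u}}
    (h : Order.IsSuccLimit o) : upIter g o = ⨆ b : Set.Iio o, upIter g b.1 :=
  Ordinal.limitRecOn_limit _ _ _ _ h

lemma upIter_le_succ_self {β : Type u} [CompleteLattice β] {g : β → β} (hg : Monotone g)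
    (o : Ordinal.{u}) : upIter g o ≤ upIter g (Order.succ o) := by
  induction o using Ordinal.induction with
  | h o IH =>
    rcases Ordinal.zero_or_succ_or_isSuccLimit o with h0 | ⟨a, ha⟩ | hl
    · simp [h0, upIter_zero]
    · subst ha
      rw [upIter_succ, upIter_succ]
      exact hg (IH a (Order.lt_succ a))
    · rw [upIter_succ, upIter_limit g hl]
      apply iSup_le
      rintro ⟨b, hb⟩
      calc upIter g b ≤ upIter g (Order.succ b) := IH b hb
        _ = g (upIter g b) := upIter_succ g b
        _ ≤ g (⨆ b : Set.Iio o, upIter g b.1) :=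
            hg (le_iSup (fun b : Set.Iio o => upIter g b.1) ⟨b, hb⟩)

lemma upIter_mono {β : Type u} [CompleteLattice β] {g : β → β} (hg : Monotone g) :
    Monotone (upIter g) := by
  intro p o hpo
  induction o using Ordinal.induction with
  | h o IH =>
    rcases eq_or_lt_of_le hpo with rfl | hlt
    · exact le_rfl
    rcases Ordinal.zero_or_succ_or_isSuccLimit o with h0 | ⟨a, ha⟩ | hl
    · exact absurd hlt (by simp [h0])
    · subst ha
      calc upIter g p ≤ upIter g a := IH a (Order.lt_succ a) (Order.lt_succ_iff.mp hlt)
        _ ≤ upIter g (Order.succ a) := upIter_le_succ_self hg a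
    · rw [upIter_limit g hl]
      exact le_iSup (fun b : Set.Iio o => upIter g b.1) ⟨p, hlt⟩

lemma upIter_le_prefixed {β : Type u} [CompleteLattice β] {g : β → β} (hg : Monotone g)
    {x : β} (hx : g x ≤ x) (o : Ordinal.{u}) : upIter g o ≤ x := by
  induction o using Ordinal.induction with
  | h o IH =>
    rcases Ordinal.zero_or_succ_or_isSuccLimit o with h0 | ⟨a, ha⟩ | hl
    · simp [h0, upIter_zero]
    · subst ha
      rw [upIter_succ]
      exact (hg (IH a (Order.lt_succ a))).trans hx
    · rw [upIter_limit g hl]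
      exact iSup_le fun b => IH b.1 b.2

/-- an S-monotone multivalued function `f : C → ℘∧(C)` on a complete
lattice has a least fixed point, namely `⋁_{α ∈ Ord} f∧^α(⊥)` where `f∧ c = ⋀ f c`. -/
theorem multivalued_lfp {β : Type u} [CompleteLattice β] (f : β → Set β)
    (hmeet : ∀ c, sInf (f c) ∈ f c)
    (hmono : ∀ x y : β, x ≤ y → SmythLE (f x) (f y)) :
    IsLeast {x | x ∈ f x} (⨆ o : Ordinal.{u}, upIter (fun c => sInf (f c)) o) := by
  set g : β → β := fun c => sInf (f c) with hg_def
  have hg : Monotone g := by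
    intro x y hxy
    apply le_sInf
    intro b hb
    obtain ⟨a, ha, hab⟩ := hmono x y hxy b hb
    exact (sInf_le ha).trans hab
  -- a fixed point of g exists among the iterates
  obtain ⟨o₁, o₂, hne, heq⟩ : ∃ o₁ o₂ : Ordinal.{u}, o₁ ≠ o₂ ∧ upIter g o₁ = upIter g o₂ := by
    have := not_injective_of_ordinal (upIter g)
    rw [Function.not_injective_iff] at this
    obtain ⟨a, b, h1, h2⟩ := this
    exact ⟨a, b, h2, h1⟩
  wlog hlt : o₁ < o₂ generalizing o₁ o₂
  · exact this o₂ o₁ hne.symm heq.symm ((hne.lt_or_gt).resolve_left hlt)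
  have hfix : g (upIter g o₁) = upIter g o₁ := by
    apply le_antisymm
    · rw [← upIter_succ g o₁, heq]
      exact upIter_mono hg (Order.succ_le_of_lt hlt)
    · rw [← upIter_succ g o₁]
      exact upIter_le_succ_self hg o₁
  set p := upIter g o₁ with hp
  have hsup : (⨆ o : Ordinal.{u}, upIter g o) = p := by
    apply le_antisymm
    · exact iSup_le fun o => upIter_le_prefixed hg hfix.le o
    · exact le_iSup (upIter g) o₁
  rw [hsup]
  constructor
  · show p ∈ f p
    have : sInf (f p) = p := hfix
    have hm := hmeet p
    rw [this] at hm
    exact hm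
  · intro x hx
    have : g x ≤ x := sInf_le hx
    exact upIter_le_prefixed hg this o₁
end

section
/- Let (α_i, S_i, A_i, γ_i), i = 1,…,n, be finitely disjunctive Galois connections between complete lattices, and for a ∈ ∏_j A_j write γ(a) = (γ_j(a_j))_j and γ_{−i}(a_{−i}) = (γ_j(a_j))_{j≠i}. Fix i and let u_i : ∏_{j=1}^n S_j → ℝ^{N} (ordered componentwise) and define u_i^G : ∏_{j=1}^n A_j → ℝ^{N} by u_i^G(a) = u_i(γ(a)). Then: (1) if u_i(·, s_{−i}) : S_i → ℝ^{N} is supermodular (respectively quasisupermodular) for every s_{−i}, then u_i^G(·, a_{−i}) : A_i → ℝ^{N} is supermodular (respectively quasisupermodular) for every a_{−i}; and (2) if u_i(s_i, ·) : ∏_{j≠i} S_j → ℝ^{N} is monotone for every s_i, then u_i^G(a_i, ·) : ∏_{j≠i} A_j → ℝ^{N} is monotone for every a_i. -/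
/-- A function `u : L → ℝ^N` on a lattice is supermodular when
`u x + u y ≤ u (x ⊔ y) + u (x ⊓ y)` (componentwise order on `ℝ^N`). -/
def Supermodular {L : Type*} [Lattice L] {N : ℕ} (u : L → (Fin N → ℝ)) : Prop :=
  ∀ x y : L, u x + u y ≤ u (x ⊔ y) + u (x ⊓ y)

/-- A function `u : L → ℝ^N` on a lattice is quasisupermodular when
`u (x ⊓ y) ≤ u x → u y ≤ u (x ⊔ y)` and `u (x ⊓ y) < u x → u y < u (x ⊔ y)`. -/
def QuasiSupermodular {L : Type*} [Lattice L] {N : ℕ} (u : L → (Fin N → ℝ)) : Prop :=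
  ∀ x y : L, (u (x ⊓ y) ≤ u x → u y ≤ u (x ⊔ y)) ∧ (u (x ⊓ y) < u x → u y < u (x ⊔ y))

/-- given finitely disjunctive Galois connections
`(αⱼ, Sⱼ, Aⱼ, γⱼ)` between complete lattices and `u = uᵢ : ∏ⱼ Sⱼ → ℝ^N`, define the
abstract utility `u^G a = u (γ a)` where `γ a = (γⱼ (a j))ⱼ`.  Then
(1) if `u(·, s₋ᵢ)` is supermodular (resp. quasisupermodular) for all `s₋ᵢ`, so is
`u^G(·, a₋ᵢ)` for all `a₋ᵢ`, and (2) if `u(sᵢ, ·)` is monotone for all `sᵢ`, so is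
`u^G(aᵢ, ·)` for all `aᵢ`. -/
theorem abstract_utility_supermodular {n : ℕ} {S A : Fin n → Type*}
    [∀ j, CompleteLattice (S j)] [∀ j, CompleteLattice (A j)]
    (α : ∀ j, S j → A j) (γ : ∀ j, A j → S j)
    (hgc : ∀ j, GaloisConnection (α j) (γ j))
    (hdisj : ∀ j, ∀ x y : A j, γ j (x ⊔ y) = γ j x ⊔ γ j y)
    {N : ℕ} (i : Fin n) (u : (∀ j, S j) → (Fin N → ℝ)) :
    ((∀ s : ∀ j, S j, Supermodular (fun x : S i => u (Function.update s i x))) →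
      ∀ a : ∀ j, A j,
        Supermodular (fun x : A i => u (fun j => γ j (Function.update a i x j)))) ∧
    ((∀ s : ∀ j, S j, QuasiSupermodular (fun x : S i => u (Function.update s i x))) →
      ∀ a : ∀ j, A j,
        QuasiSupermodular (fun x : A i => u (fun j => γ j (Function.update a i x j)))) ∧
    ((∀ s t : ∀ j, S j, s ≤ t → s i = t i → u s ≤ u t) →
      ∀ a b : ∀ j, A j, a ≤ b → a i = b i →
        u (fun j => γ j (a j)) ≤ u (fun j => γ j (b j))) := by

  have key : ∀ (a : ∀ j, A j) (x : A i),
      (fun j => γ j (Function.update a i x j)) =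
        Function.update (fun j => γ j (a j)) i (γ i x) := by
    intro a x
    funext j
    rcases eq_or_ne j i with rfl | h
    · simp
    · simp [Function.update_of_ne h]
  refine ⟨?_, ?_, ?_⟩
  · intro hS a x y
    have h1 := hS (fun j => γ j (a j)) (γ i x) (γ i y)
    simp only [key, hdisj i, (hgc i).u_inf]
    exact h1
  · intro hS a x y
    have h1 := hS (fun j => γ j (a j)) (γ i x) (γ i y)
    simp only [key, hdisj i, (hgc i).u_inf]
    exact h1
  · intro hM a b hab hi
    refine hM _ _ (fun j => (hgc j).monotone_u (hab j)) ?_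
    simp [hi]
end
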